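/- Fix n and a barrier start position b₀ = 1 for even-indexed positions. Define T(n,i) as the number of i-element subsets γ = {γ₁ < γ₂ < ... < γᵢ} of {1,...,n} such that γⱼ ≠ 2j for all j (i.e., no element is 'at home'). Then for 1 ≤ i ≤ ⌊n/2⌋, T(n,i) = C(n,i) − C(n,i−1), and T(n,0) = 1. -/

import Mathlib

open Finset

/-- The "no mark at home" predicate. -/
abbrev Q (γ : Finset ℕ) : Prop :=
  ∀ j ∈ Finset.range γ.card, (γ.sort (· ≤ ·)).getD j 0 ≠ 2 * (j + 1)

lemma sort_insert_max {s : Finset ℕ} {n : ℕ} (h : ∀ b ∈ s, b < n) :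
    (insert n s).sort (· ≤ ·) = s.sort (· ≤ ·) ++ [n] := by
  have hn : n ∉ s := fun hh => lt_irrefl n (h n hh)
  refine (fun hp hs => List.Perm.eq_of_pairwise' (r := fun a b : ℕ => a ≤ b) (Finset.pairwise_sort _ _) hs hp) ?_ ?_
  · have hp : List.Perm ((insert n s).sort (· ≤ ·)) (n :: s.sort (· ≤ ·)) := by
      rw [← Multiset.coe_eq_coe, Finset.sort_eq, ← Multiset.cons_coe, Finset.sort_eq,
        Finset.insert_val_of_notMem hn]
    exact hp.trans (List.perm_append_singleton _ _).symm
  · rw [List.pairwise_append]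
    refine ⟨Finset.pairwise_sort _ _, List.pairwise_singleton _ _, ?_⟩
    intro x hx y hy
    simp only [List.mem_singleton] at hy
    subst hy
    exact le_of_lt (h x ((Finset.mem_sort _).mp hx))

lemma Q_insert {s : Finset ℕ} {n k : ℕ} (h : ∀ b ∈ s, b < n) (hcard : s.card = k) :
    Q (insert n s) ↔ (n ≠ 2 * (k + 1) ∧ Q s) := by
  have hn : n ∉ s := fun hh => lt_irrefl n (h n hh)
  have hcard' : (insert n s).card = k + 1 := by rw [Finset.card_insert_of_notMem hn, hcard]
  have hsort : (insert n s).sort (· ≤ ·) = s.sort (· ≤ ·) ++ [n] := sort_insert_max h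
  have hlen : (s.sort (· ≤ ·)).length = k := by rw [Finset.length_sort, hcard]
  constructor
  · intro hQ
    constructor
    · have := hQ k (by simp [hcard'])
      rwa [hsort, List.getD_append_right _ _ _ _ (by omega), hlen, Nat.sub_self] at this
    · intro j hj
      simp only [Finset.mem_range, hcard] at hj
      have := hQ j (by simp [hcard']; omega)
      rwa [hsort, List.getD_append _ _ _ _ (by omega)] at this
  · rintro ⟨hne, hQ⟩ j hj
    simp only [Finset.mem_range, hcard'] at hj
    rw [hsort]
    rcases Nat.lt_or_ge j k with hjk | hjk
    · rw [List.getD_append _ _ _ _ (by omega)]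
      exact hQ j (by simp [hcard]; omega)
    · have hjk' : j = k := by omega
      subst hjk'
      rw [List.getD_append_right _ _ _ _ (by omega), hlen, Nat.sub_self]
      simpa using hne

lemma Icc_one_succ (m : ℕ) : Finset.Icc 1 (m + 1) = insert (m + 1) (Finset.Icc 1 m) := by
  ext x; simp [Finset.mem_Icc, Finset.mem_insert]; omega

/-- `T n i` counts the `i`-element subsets `γ = {γ₁ < ⋯ < γᵢ}` of `{1,…,n}` such that
`γⱼ ≠ 2j` for every `j` (no mark is at home). -/
def T (n i : ℕ) : ℕ :=
  (((Finset.Icc 1 n).powersetCard i).filter fun γ =>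
    ∀ j ∈ Finset.range γ.card, (γ.sort (· ≤ ·)).getD j 0 ≠ 2 * (j + 1)).card

lemma T_eq (n i : ℕ) : T n i = (((Finset.Icc 1 n).powersetCard i).filter Q).card := rfl

lemma T_zero (n : ℕ) : T n 0 = 1 := by
  rw [T_eq, Finset.powersetCard_zero]
  rw [Finset.filter_singleton]
  simp [Q]

lemma T_rec (m k : ℕ) :
    T (m + 1) (k + 1) =
      T m (k + 1) + (if m + 1 = 2 * (k + 1) then 0 else T m k) := by
  classical
  have hnm : (m + 1) ∉ Finset.Icc 1 m := by simp
  have hdisj : Disjoint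
      (((Finset.Icc 1 m).powersetCard (k + 1)).filter Q)
      ((((Finset.Icc 1 m).powersetCard k).image (insert (m + 1))).filter Q) := by
    apply Finset.disjoint_filter_filter
    rw [Finset.disjoint_left]
    intro s hs hs'
    rw [Finset.mem_powersetCard] at hs
    rw [Finset.mem_image] at hs'
    obtain ⟨t, ht, rfl⟩ := hs'
    have := hs.1 (Finset.mem_insert_self (m + 1) t)
    simp at this
  rw [T_eq, Icc_one_succ, Finset.powersetCard_succ_insert hnm, Finset.filter_union,
    Finset.card_union_of_disjoint hdisj]
  have h1 : (((Finset.Icc 1 m).powersetCard (k + 1)).filter Q).card = T m (k + 1) :=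
    (T_eq m (k + 1)).symm
  have himg : ∀ s ∈ (Finset.Icc 1 m).powersetCard k,
      (Q (insert (m + 1) s) ↔ (m + 1 ≠ 2 * (k + 1) ∧ Q s)) := by
    intro s hs
    rw [Finset.mem_powersetCard] at hs
    refine Q_insert ?_ hs.2
    intro b hb
    have := hs.1 hb
    rw [Finset.mem_Icc] at this
    omega
  have h2 : ((((Finset.Icc 1 m).powersetCard k).image (insert (m + 1))).filter Q).card
      = (if m + 1 = 2 * (k + 1) then 0 else T m k) := by
    rw [Finset.filter_image, Finset.card_image_of_injOn]
    · by_cases hcase : m + 1 = 2 * (k + 1)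
      · rw [if_pos hcase, Finset.card_eq_zero, Finset.filter_eq_empty_iff]
        intro s hs
        rw [himg s hs]
        simp [hcase]
      · rw [if_neg hcase, T_eq]
        congr 1
        apply Finset.filter_congr
        intro s hs
        rw [himg s hs]
        simp [hcase]
    · intro s hs t ht hst
      rw [Finset.coe_filter, Set.mem_setOf_eq] at hs ht
      have hs' := (Finset.mem_powersetCard.mp hs.1).1
      have ht' := (Finset.mem_powersetCard.mp ht.1).1
      have hms : (m + 1) ∉ s := fun hh => by simpa using Finset.mem_Icc.mp (hs' hh)
      have hmt : (m + 1) ∉ t := fun hh => by simpa using Finset.mem_Icc.mp (ht' hh)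
      have := congrArg (fun u => Finset.erase u (m + 1)) hst
      simpa [Finset.erase_insert, hms, hmt] using this
  rw [h1, h2]

/-- closed form -/
def F (n i : ℕ) : ℕ :=
  if i = 0 then 1
  else if 2 * i ≤ n then n.choose i - n.choose (i - 1)
  else n.choose i - n.choose (i + 1)

lemma choose_up {m k : ℕ} (hk : 1 ≤ k) (h : 2 * k ≤ m) :
    m.choose (k - 1) ≤ m.choose k := by
  have h1 : k - 1 < m / 2 := by omega
  have := Nat.choose_le_succ_of_lt_half_left h1
  rwa [Nat.sub_add_cancel hk] at this

lemma choose_down {m k : ℕ} (h : m ≤ 2 * k) :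
    m.choose (k + 1) ≤ m.choose k := by
  by_cases hk : k + 1 ≤ m
  · rw [← Nat.choose_symm hk, ← Nat.choose_symm (by omega : k ≤ m)]
    have h2 : m - (k + 1) = (m - k) - 1 := by omega
    rw [h2]
    exact choose_up (by omega) (by omega)
  · rw [Nat.choose_eq_zero_of_lt (by omega)]
    exact Nat.zero_le _

lemma F_zero (n : ℕ) : F n 0 = 1 := rfl

lemma F_low {n i : ℕ} (hi : 1 ≤ i) (h : 2 * i ≤ n) :
    F n i = n.choose i - n.choose (i - 1) := by
  unfold F
  rw [if_neg (by omega), if_pos h]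

lemma F_high {n i : ℕ} (hi : 1 ≤ i) (h : n ≤ 2 * i) :
    F n i = n.choose i - n.choose (i + 1) := by
  unfold F
  rw [if_neg (by omega)]
  by_cases h2 : 2 * i ≤ n
  · rw [if_pos h2]
    have : n = 2 * i := by omega
    subst this
    rw [Nat.choose_symm_of_eq_add (by omega : 2 * i = (i - 1) + (i + 1))]
  · rw [if_neg h2]

lemma main : ∀ n i, T n i = F n i := by
  intro n
  induction n with
  | zero =>
    intro i
    rcases Nat.eq_zero_or_pos i with rfl | hi
    · rw [T_zero]; rfl
    · rw [T_eq]
      rw [show Finset.Icc 1 0 = (∅ : Finset ℕ) by simp]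
      rw [Finset.powersetCard_eq_empty.mpr (by simp; omega)]
      simp only [Finset.filter_empty, Finset.card_empty]
      rw [F_high hi (by omega)]
      rw [Nat.choose_eq_zero_of_lt (by omega), Nat.choose_eq_zero_of_lt (by omega)]
  | succ m ih =>
    intro i
    rcases Nat.eq_zero_or_pos i with rfl | hi
    · rw [T_zero]; rfl
    obtain ⟨k, rfl⟩ : ∃ k, i = k + 1 := ⟨i - 1, by omega⟩
    rw [T_rec, ih (k + 1)]
    by_cases hc : m + 1 = 2 * (k + 1)
    · -- boundary case m = 2k+1
      rw [if_pos hc]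
      have hm : m = 2 * k + 1 := by omega
      subst hm
      rw [F_high (by omega) (by omega), F_low (by omega) (by omega)]
      simp only [Nat.add_sub_cancel, Nat.add_zero]
      rcases Nat.eq_zero_or_pos k with rfl | hk
      · decide
      obtain ⟨j, rfl⟩ : ∃ j, k = j + 1 := ⟨k - 1, by omega⟩
      have p1 : (2 * (j + 1) + 1 + 1).choose (j + 1 + 1)
          = (2 * (j + 1) + 1).choose (j + 1) + (2 * (j + 1) + 1).choose (j + 1 + 1) :=
        Nat.choose_succ_succ' _ _
      have p2 : (2 * (j + 1) + 1 + 1).choose (j + 1)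
          = (2 * (j + 1) + 1).choose j + (2 * (j + 1) + 1).choose (j + 1) :=
        Nat.choose_succ_succ' _ _
      have psym : (2 * (j + 1) + 1).choose (j + 1 + 1) = (2 * (j + 1) + 1).choose (j + 1) :=
        Nat.choose_symm_half (j + 1)
      have psym2 : (2 * (j + 1) + 1).choose (j + 1 + 1 + 1) = (2 * (j + 1) + 1).choose j :=
        Nat.choose_symm_of_eq_add (by omega)
      have hup : (2 * (j + 1) + 1).choose j ≤ (2 * (j + 1) + 1).choose (j + 1) :=
        Nat.choose_le_succ_of_lt_half_left (by omega)
      omega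
    · rw [if_neg hc]
      rcases Nat.eq_zero_or_pos k with rfl | hk
      · -- i = 1
        rw [T_zero]
        rcases Nat.eq_zero_or_pos m with rfl | hm
        · decide
        have hm2 : 2 ≤ m := by omega
        rw [F_low (by omega) (by omega), F_low (by omega) (by omega)]
        simp [Nat.choose_one_right]
        omega
      obtain ⟨j, rfl⟩ : ∃ j, k = j + 1 := ⟨k - 1, by omega⟩
      rw [ih (j + 1)]
      rcases Nat.lt_or_ge (2 * (j + 1 + 1)) (m + 1) with hlt | hge
      · -- 2(k+1) ≤ m
        rw [F_low (by omega) (by omega), F_low (by omega) (by omega),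
          F_low (by omega) (by omega)]
        simp only [Nat.add_sub_cancel]
        have p1 : (m + 1).choose (j + 1 + 1) = m.choose (j + 1) + m.choose (j + 1 + 1) :=
          Nat.choose_succ_succ' _ _
        have p2 : (m + 1).choose (j + 1) = m.choose j + m.choose (j + 1) :=
          Nat.choose_succ_succ' _ _
        have hup1 : m.choose j ≤ m.choose (j + 1) :=
          Nat.choose_le_succ_of_lt_half_left (by omega)
        have hup2 : m.choose (j + 1) ≤ m.choose (j + 1 + 1) :=
          Nat.choose_le_succ_of_lt_half_left (by omega)
        omega
      · -- m ≤ 2k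
        have hm2k : m ≤ 2 * (j + 1) := by omega
        rw [F_high (by omega) (by omega), F_high (by omega) (by omega),
          F_high (by omega) (by omega)]
        have p1 : (m + 1).choose (j + 1 + 1) = m.choose (j + 1) + m.choose (j + 1 + 1) :=
          Nat.choose_succ_succ' _ _
        have p3 : (m + 1).choose (j + 1 + 1 + 1)
            = m.choose (j + 1 + 1) + m.choose (j + 1 + 1 + 1) :=
          Nat.choose_succ_succ' _ _
        have hd1 : m.choose (j + 1 + 1) ≤ m.choose (j + 1) := choose_down (by omega)
        have hd2 : m.choose (j + 1 + 1 + 1) ≤ m.choose (j + 1 + 1) := choose_down (by omega)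
        omega

theorem stmt2 (n i : ℕ) (h1 : 1 ≤ i) (h2 : i ≤ n / 2) :
    T n i = n.choose i - n.choose (i - 1) ∧ T n 0 = 1 := by
  refine ⟨?_, T_zero n⟩
  rw [main n i, F_low h1 (by omega)]
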